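/- Let P, A, B be points in a Euclidean space with A ≠ P and B ≠ P, and suppose the angle ∠APB equals 2π/3 (as when P is the center of an equilateral triangle of verifiers and A, B lie on the segments from P to two vertices). Then dist(A, P) + dist(B, P) ≤ (2/√3) · dist(A, B), with equality if and only if dist(A, P) = dist(B, P); moreover 2/√3 < 3/2. Consequently, since any attack with at most one intermediate node takes time at least (3/2)·dist(A,B)/c between the end nodes A and B while the honest prover takes (dist(A,P) + dist(B,P))/c, the attack always takes strictly longer than the honest protocol. -/

import Mathlib

set_option maxHeartbeats 800000


open EuclideanGeometry Real

/-- If the angle `∠ A P B` is `2π/3`, then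
`dist A P + dist B P ≤ (2/√3) · dist A B` with equality iff
`dist A P = dist B P`; moreover `2/√3 < 3/2`, so the attacker's required time
`(3/2)·dist A B / c` strictly exceeds the honest prover's time
`(dist A P + dist B P)/c`. -/
theorem equilateral_triangle_attack_slower
    {V : Type*} [NormedAddCommGroup V] [InnerProductSpace ℝ V]
    (P A B : V) (hA : A ≠ P) (hB : B ≠ P)
    (hangle : ∠ A P B = 2 * π / 3) (c : ℝ) (hc : 0 < c) :
    dist A P + dist B P ≤ (2 / Real.sqrt 3) * dist A B ∧
    (dist A P + dist B P = (2 / Real.sqrt 3) * dist A B ↔ dist A P = dist B P) ∧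
    (2 / Real.sqrt 3 < 3 / 2) ∧
    (dist A P + dist B P) / c < (3 / 2) * dist A B / c := by
  have hcos : Real.cos (2 * π / 3) = -(1/2) := by
    rw [show (2 * π / 3 : ℝ) = π - π / 3 by ring, Real.cos_pi_sub,
      Real.cos_pi_div_three]
  have hlaw := EuclideanGeometry.law_cos A P B
  rw [hangle, hcos] at hlaw
  set x := dist A P with hx
  set y := dist B P with hy
  set d := dist A B with hd
  have hd2 : d ^ 2 = x ^ 2 + y ^ 2 + x * y := by nlinarith [hlaw]
  have hx0 : 0 < x := dist_pos.mpr hA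
  have hy0 : 0 < y := dist_pos.mpr hB
  have hd0 : 0 < d := by
    rcases (dist_nonneg : (0:ℝ) ≤ d).lt_or_eq with h | h
    · exact h
    · exfalso; nlinarith
  have hs0 : (0:ℝ) < Real.sqrt 3 := Real.sqrt_pos.mpr (by norm_num)
  have hs2 : Real.sqrt 3 ^ 2 = 3 := Real.sq_sqrt (by norm_num)
  have key : Real.sqrt 3 * (x + y) ≤ 2 * d := by
    nlinarith [sq_nonneg (x - y), sq_nonneg (Real.sqrt 3 * (x + y) - 2 * d)]
  have hle : x + y ≤ 2 / Real.sqrt 3 * d := by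
    rw [div_mul_eq_mul_div, le_div_iff₀ hs0]
    nlinarith
  have hfrac : 2 / Real.sqrt 3 < 3 / 2 := by
    rw [div_lt_div_iff₀ hs0 (by norm_num : (0:ℝ) < 2)]
    nlinarith
  refine ⟨hle, ⟨fun h => ?_, fun h => ?_⟩, hfrac, ?_⟩
  · have h' : Real.sqrt 3 * (x + y) = 2 * d := by
      field_simp at h
      nlinarith
    nlinarith [sq_nonneg (x - y)]
  · rw [div_mul_eq_mul_div, eq_div_iff hs0.ne']
    have hsq : (Real.sqrt 3 * x) ^ 2 = d ^ 2 := by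
      rw [mul_pow, hs2]; nlinarith [hd2, h]
    have h3 : d = Real.sqrt 3 * x := by
      have hp : (0:ℝ) ≤ Real.sqrt 3 * x := by positivity
      exact ((pow_left_inj₀ hp hd0.le two_ne_zero).mp hsq).symm
    linear_combination (-(Real.sqrt 3)) * h - 2 * h3
  · have h1 : 2 / Real.sqrt 3 * d < 3 / 2 * d := mul_lt_mul_of_pos_right hfrac hd0
    exact div_lt_div_of_pos_right (lt_of_le_of_lt hle h1) hc
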